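/- For every weight vector λ = (λ_0, …, λ_l) ∈ ℂ^{l+1}, set w_λ := ∑_{i=0}^l λ_i u_i^{(0)} ∈ π₀ and define operators on π₀: the twisted derivative ∂_λ(R) := ∂R + w_λ·R, and, for P ∈ π₀, the extended hamiltonian vector field ξ_P^λ(R) := ξ_P(R) + (∑_{i=0}^l λ_i δ_i P)·R. Then for every P ∈ π₀, ξ_P^λ commutes with the twisted derivative: ξ_P^λ ∘ ∂_λ = ∂_λ ∘ ξ_P^λ. (Consequently each quotient F_λ = π₀ / ∂_λ(π₀) is a module over the Lie algebra F₀ of local functionals.) -/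

import Mathlib

open MvPolynomial

noncomputable section

/-- The algebra of differential polynomials in the variables `u_i^{(n)}`, `1 ≤ i ≤ l`, `n ≥ 0`. -/
abbrev Pi0 (l : ℕ) : Type := MvPolynomial (Fin l × ℕ) ℂ

/-- The variable `u_i^{(n)}`. -/
def u {l : ℕ} (i : Fin l) (n : ℕ) : Pi0 l := X (i, n)

/-- The derivation `∂` with `∂ u_i^{(n)} = u_i^{(n+1)}`. -/
def pa (l : ℕ) : Derivation ℂ (Pi0 l) (Pi0 l) :=
  mkDerivation ℂ (fun p => X (p.1, p.2 + 1))

/-- An affine generalized Cartan matrix of size `(l+1) × (l+1)`: an indecomposable integer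
matrix with `a_{ii} = 2`, `a_{ij} ≤ 0` for `i ≠ j`, `a_{ij} = 0 ↔ a_{ji} = 0`, symmetrizable
by positive rationals `d_i`, and admitting a vector of positive integer labels `(a_0,…,a_l)`
with `∑_j a_j a_{ij} = 0` for all `i`. -/
structure AffineGCM (l : ℕ) where
  A : Matrix (Fin (l+1)) (Fin (l+1)) ℤ
  diag : ∀ i, A i i = 2
  offdiag : ∀ i j, i ≠ j → A i j ≤ 0
  zeroIff : ∀ i j, A i j = 0 ↔ A j i = 0
  d : Fin (l+1) → ℚ
  d_pos : ∀ i, 0 < d i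
  dsymm : ∀ i j, d i * A i j = d j * A j i
  label : Fin (l+1) → ℕ
  label_pos : ∀ i, 0 < label i
  null : ∀ i, ∑ j, (label j : ℤ) * A i j = 0
  indec : ∀ S : Set (Fin (l+1)), (∀ i ∈ S, ∀ j ∉ S, A i j = 0) → S = ∅ ∨ S = Set.univ

namespace AffineGCM

variable {l : ℕ} (K : AffineGCM l)

/-- The symmetrized bilinear form `(α_i, α_j) := d_i a_{ij}`. -/
def B (i j : Fin (l+1)) : ℂ := (K.d i : ℂ) * (K.A i j : ℂ)

/-- `u_j^{(n)}` for `j = 0,…,l`, where `u_0^{(n)} := -(1/a_0) ∑_{i=1}^l a_i u_i^{(n)}`.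
Here `j = 0` is `Fin.cases`' zero case and `j = i.succ` corresponds to `u_i^{(n)}`. -/
def Uv (j : Fin (l+1)) (n : ℕ) : Pi0 l :=
  Fin.cases (-(1 / (K.label 0 : ℂ)) • ∑ i : Fin l, (K.label i.succ : ℂ) • u i n)
    (fun i => u i n) j

/-- The Faà di Bruno polynomials: `B_i^{(0)} = 1`,
`B_i^{(n+1)} = -u_i^{(0)} B_i^{(n)} + ∂ B_i^{(n)}`. -/
def FdB (i : Fin (l+1)) : ℕ → Pi0 l
  | 0 => 1
  | n+1 => -(K.Uv i 0) * FdB i n + pa l (FdB i n)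

/-- The unique `ℂ`-derivation `Q_i` of `π₀` with `Q_i u_j^{(n)} = -(α_i,α_j) B_i^{(n)}`
for `1 ≤ j ≤ l`, `n ≥ 0`. -/
def Q (i : Fin (l+1)) : Derivation ℂ (Pi0 l) (Pi0 l) :=
  mkDerivation ℂ (fun p => -(K.B i p.1.succ) • K.FdB i p.2)

/-- The variational derivative `δ_i P := ∑_{j=1}^l (α_i,α_j) ∑_{n ≥ 0} (-∂)^n (∂P/∂u_j^{(n)})`. -/
def varder (i : Fin (l+1)) (P : Pi0 l) : Pi0 l :=
  ∑ j : Fin l, K.B i j.succ •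
    ∑ᶠ n : ℕ, ((-(pa l).toLinearMap) ^ n) (pderiv (j, n) P)

/-- The hamiltonian vector field `ξ_P`: the unique `ℂ`-derivation of `π₀` with
`ξ_P u_i^{(n)} = ∂^{n+1}(δ_i P)`. -/
def xi (P : Pi0 l) : Derivation ℂ (Pi0 l) (Pi0 l) :=
  mkDerivation ℂ (fun p => ((pa l).toLinearMap ^ (p.2 + 1)) (K.varder p.1.succ P))

lemma B_label_sum (j : Fin (l+1)) : ∑ i, (K.label i : ℂ) * K.B i j = 0 := by
  have hB : ∀ i, K.B i j = (K.d j : ℂ) * ((K.A j i : ℤ) : ℂ) := by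
    intro i
    have h := K.dsymm i j
    unfold B
    have : ((K.d i * (K.A i j : ℚ) : ℚ) : ℂ) = ((K.d j * (K.A j i : ℚ) : ℚ) : ℂ) := by
      exact_mod_cast congrArg (fun x : ℚ => (x : ℂ)) h
    push_cast at this ⊢
    linear_combination this
  calc ∑ i, (K.label i : ℂ) * K.B i j
      = (K.d j : ℂ) * ((∑ i, (K.label i : ℤ) * K.A j i : ℤ) : ℂ) := by
        push_cast
        rw [Finset.mul_sum]
        refine Finset.sum_congr rfl fun i _ => ?_
        rw [hB i]; ring
    _ = 0 := by rw [K.null j]; simp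

lemma label0_ne : (K.label 0 : ℂ) ≠ 0 :=
  Nat.cast_ne_zero.mpr (K.label_pos 0).ne'

lemma B_zero (j : Fin (l+1)) :
    K.B 0 j = -(1 / (K.label 0 : ℂ)) * ∑ i : Fin l, (K.label i.succ : ℂ) * K.B i.succ j := by
  have h := K.B_label_sum j
  rw [Fin.sum_univ_succ] at h
  have h0 := K.label0_ne
  field_simp
  linear_combination h

lemma varder_zero (P : Pi0 l) :
    K.varder 0 P
      = -(1 / (K.label 0 : ℂ)) • ∑ i : Fin l, (K.label i.succ : ℂ) • K.varder i.succ P := by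
  unfold varder
  simp only [Finset.smul_sum, smul_smul]
  rw [Finset.sum_comm]
  refine Finset.sum_congr rfl fun j _ => ?_
  rw [← Finset.sum_smul, K.B_zero j.succ, Finset.mul_sum]

lemma xi_pa_comm (P R : Pi0 l) : K.xi P (pa l R) = pa l (K.xi P R) := by
  have h : ⁅K.xi P, pa l⁆ = (0 : Derivation ℂ (Pi0 l) (Pi0 l)) := by
    apply MvPolynomial.derivation_ext
    rintro ⟨i, n⟩
    rw [Derivation.commutator_apply, Derivation.zero_apply]
    have hpa : (pa l) (X (i, n)) = X (i, n + 1) := mkDerivation_X ℂ _ _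
    have hxi : ∀ m : ℕ, K.xi P (X (i, m)) = ((pa l).toLinearMap ^ (m + 1)) (K.varder i.succ P) :=
      fun m => mkDerivation_X ℂ _ _
    rw [hpa, hxi, hxi]
    rw [sub_eq_zero]
    show ((pa l).toLinearMap ^ (n + 1 + 1)) (K.varder i.succ P)
        = (pa l) (((pa l).toLinearMap ^ (n + 1)) (K.varder i.succ P))
    show _ = (pa l).toLinearMap (((pa l).toLinearMap ^ (n + 1)) (K.varder i.succ P))
    rw [← Module.End.mul_apply, ← pow_succ']
  have := congrArg (fun D : Derivation ℂ (Pi0 l) (Pi0 l) => D R) h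
  simp only [Derivation.commutator_apply, Derivation.zero_apply, sub_eq_zero] at this
  exact this

lemma xi_Uv (P : Pi0 l) (j : Fin (l+1)) : K.xi P (K.Uv j 0) = pa l (K.varder j P) := by
  have hxiX : ∀ i : Fin l, K.xi P (u i 0) = pa l (K.varder i.succ P) := by
    intro i
    have : K.xi P (X (i, 0)) = ((pa l).toLinearMap ^ (0 + 1)) (K.varder i.succ P) :=
      mkDerivation_X ℂ _ _
    rw [u, this, pow_one]; rfl
  induction j using Fin.cases with
  | zero =>
      show K.xi P (-(1 / (K.label 0 : ℂ)) • ∑ i : Fin l, (K.label i.succ : ℂ) • u i 0) = _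
      rw [K.varder_zero P, Derivation.map_smul, map_sum, Derivation.map_smul, map_sum]
      refine congrArg ((-(1 / (K.label 0 : ℂ))) • ·) ?_
      refine Finset.sum_congr rfl fun i _ => ?_
      rw [Derivation.map_smul, Derivation.map_smul, hxiX i]
  | succ i =>
      show K.xi P (u i 0) = _
      exact hxiX i

end AffineGCM

/-- for any weight `λ ∈ ℂ^{l+1}`, with `w_λ = ∑ λ_i u_i^{(0)}`, the extended
hamiltonian vector field `ξ_P^λ(R) = ξ_P(R) + (∑ λ_i δ_i P)·R` commutes with the twisted
derivative `∂_λ(R) = ∂R + w_λ·R`. -/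
theorem extended_xi_commutes_with_twisted_derivative (l : ℕ) (hl : 1 ≤ l)
    (K : AffineGCM l) (lam : Fin (l+1) → ℂ) (P : Pi0 l) (R : Pi0 l) :
    K.xi P (pa l R + (∑ i, lam i • K.Uv i 0) * R)
        + (∑ i, lam i • K.varder i P) * (pa l R + (∑ i, lam i • K.Uv i 0) * R)
      = pa l (K.xi P R + (∑ i, lam i • K.varder i P) * R)
        + (∑ i, lam i • K.Uv i 0) * (K.xi P R + (∑ i, lam i • K.varder i P) * R) := by
  set w : Pi0 l := ∑ i, lam i • K.Uv i 0 with hw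
  set s : Pi0 l := ∑ i, lam i • K.varder i P with hs
  have hxw : K.xi P w = pa l s := by
    rw [hw, hs, map_sum, map_sum]
    refine Finset.sum_congr rfl fun i _ => ?_
    rw [Derivation.map_smul, Derivation.map_smul, K.xi_Uv P i]
  rw [map_add, map_add, K.xi_pa_comm P R, Derivation.leibniz, Derivation.leibniz,
    smul_eq_mul, smul_eq_mul, smul_eq_mul, smul_eq_mul, hxw]
  ring
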